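/- Let ψ : Ŵ → V be an invariant surjection with spinor p, and let v ∈ V satisfy Q(v) ≠ 0. Then there are exactly two 3-dimensional isotropic subspaces U ⊆ V such that the image ψ(L_U) equals the line ℂv; denoting them U_1 ≠ U_2, one has U_1 ∩ U_2 = {0} and U_1 + U_2 = {u ∈ V : B(u,v) = 0}, the orthogonal complement of v. -/

import Mathlib

namespace SSD

noncomputable section

/-- `V` is the 7-dimensional complex vector space `ℂ^7`. -/
abbrev V7 : Type := Fin 7 → ℂ

/-- `Ŵ` is the 8-dimensional spin space, with basis (in this order):
`1, v̂₅, v̂₆, v̂₇, v̂₅v̂₆, v̂₆v̂₇, v̂₅v̂₇, v̂₅v̂₆v̂₇`. -/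
abbrev W8 : Type := Fin 8 → ℂ

/-- The constant `1/√2` as a complex number. -/
def is2 : ℂ := ((Real.sqrt 2 : ℝ) : ℂ)⁻¹

/-- The Clifford action of `v ∈ V` on `x ∈ Ŵ`:  `e₅,e₆,e₇` act by exterior
multiplication by `v̂₅,v̂₆,v̂₇`; `e₁,e₂,e₃` act by `−∂/∂v̂₇, ∂/∂v̂₆, −∂/∂v̂₅`;
`e₄` acts by `(1/√2)·(−1)^deg`. Written out in coordinates. -/
def actFun (v : V7) (x : W8) : W8 := fun k =>
  match k with
  | 0 => -(v 0) * x 3 + v 1 * x 2 - v 2 * x 1 + is2 * v 3 * x 0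
  | 1 => v 0 * x 6 - v 1 * x 4 - is2 * v 3 * x 1 + v 4 * x 0
  | 2 => v 0 * x 5 - v 2 * x 4 - is2 * v 3 * x 2 + v 5 * x 0
  | 3 => v 1 * x 5 - v 2 * x 6 - is2 * v 3 * x 3 + v 6 * x 0
  | 4 => -(v 0) * x 7 + is2 * v 3 * x 4 + v 4 * x 2 - v 5 * x 1
  | 5 => -(v 2) * x 7 + is2 * v 3 * x 5 + v 5 * x 3 - v 6 * x 2
  | 6 => -(v 1) * x 7 + is2 * v 3 * x 6 + v 4 * x 3 - v 6 * x 1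
  | 7 => -(is2 * v 3) * x 7 + v 4 * x 5 - v 5 * x 6 + v 6 * x 4

/-- The action `v · x`, packaged as a bilinear map. -/
def act : V7 →ₗ[ℂ] W8 →ₗ[ℂ] W8 :=
  LinearMap.mk₂ ℂ actFun
    (fun m m' n => by funext k; fin_cases k <;> simp [actFun] <;> ring)
    (fun c m n => by funext k; fin_cases k <;> simp [actFun] <;> ring)
    (fun m n n' => by funext k; fin_cases k <;> simp [actFun] <;> ring)
    (fun c m n => by funext k; fin_cases k <;> simp [actFun] <;> ring)

/-- The bilinear form `B` on `V`: `B(eᵢ,eⱼ) = (−1)^(i+1)` if `i+j=8`, else `0`. -/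
def Bform (u w : V7) : ℂ :=
  u 0 * w 6 + u 6 * w 0 - u 1 * w 5 - u 5 * w 1 + u 2 * w 4 + u 4 * w 2 - u 3 * w 3

/-- The quadratic form `Q(v) = B(v,v)/2` on `V`. -/
def Qform (v : V7) : ℂ := Bform v v / 2

/-- The quadratic form `Q̂` on `Ŵ`:
`Q̂ = α_∅α₅₆₇ + α₆α₅₇ − α₇α₅₆ − α₆₇α₅` in the coordinates of the basis above. -/
def Qhat (x : W8) : ℂ := x 0 * x 7 + x 2 * x 6 - x 3 * x 4 - x 5 * x 1

/-- The bilinear form `B̂(p,q) = Q̂(p+q) − Q̂(p) − Q̂(q)` on `Ŵ`. -/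
def Bhat (p q : W8) : ℂ := Qhat (p + q) - Qhat p - Qhat q

/-- A subspace `U ⊆ V` is isotropic if `B` vanishes identically on it. -/
def IsIsotropic (U : Submodule ℂ V7) : Prop :=
  ∀ u ∈ U, ∀ w ∈ U, Bform u w = 0

/-- `L_U = {x ∈ Ŵ | u·x = 0 for all u ∈ U}`. -/
def LU (U : Submodule ℂ V7) : Submodule ℂ W8 :=
  ⨅ u ∈ U, LinearMap.ker (act u)

/-- `ψ : Ŵ → V` is an invariant surjection with spinor `p` if `p ≠ 0`, `ψ(p)=0`
and `ψ(v·p) = v` for all `v ∈ V`. -/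
def IsInvSurj (ψ : W8 →ₗ[ℂ] V7) (p : W8) : Prop :=
  p ≠ 0 ∧ ψ p = 0 ∧ ∀ v : V7, ψ (act v p) = v


open Module Submodule LinearMap

lemma mk8_0 (h : (0:ℕ) < 8) : (⟨0, h⟩ : Fin 8) = 0 := rfl
lemma mk8_1 (h : (1:ℕ) < 8) : (⟨1, h⟩ : Fin 8) = 1 := rfl
lemma mk8_2 (h : (2:ℕ) < 8) : (⟨2, h⟩ : Fin 8) = 2 := rfl
lemma mk8_3 (h : (3:ℕ) < 8) : (⟨3, h⟩ : Fin 8) = 3 := rfl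
lemma mk8_4 (h : (4:ℕ) < 8) : (⟨4, h⟩ : Fin 8) = 4 := rfl
lemma mk8_5 (h : (5:ℕ) < 8) : (⟨5, h⟩ : Fin 8) = 5 := rfl
lemma mk8_6 (h : (6:ℕ) < 8) : (⟨6, h⟩ : Fin 8) = 6 := rfl
lemma mk8_7 (h : (7:ℕ) < 8) : (⟨7, h⟩ : Fin 8) = 7 := rfl

lemma is2_sq : is2 ^ 2 = (2 : ℂ)⁻¹ := by
  have h2 : ((Real.sqrt 2 : ℝ) : ℂ) ^ 2 = 2 := by
    rw [← Complex.ofReal_pow, Real.sq_sqrt (by norm_num : (0:ℝ) ≤ 2)]; norm_num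
  rw [is2, inv_pow, h2]

lemma act_apply (u : V7) (x : W8) : act u x = actFun u x := rfl

lemma clifford (u w : V7) (x : W8) :
    act u (act w x) + act w (act u x) = -(Bform u w) • x := by
  have hs := is2_sq
  funext k
  fin_cases k <;>
    simp only [act_apply, actFun, Pi.add_apply, Pi.smul_apply, smul_eq_mul, Bform,
      mk8_0, mk8_1, mk8_2, mk8_3, mk8_4, mk8_5, mk8_6, mk8_7] <;>
    [ linear_combination (2 * u 3 * w 3 * x 0) * hs;
      linear_combination (2 * u 3 * w 3 * x 1) * hs;
      linear_combination (2 * u 3 * w 3 * x 2) * hs;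
      linear_combination (2 * u 3 * w 3 * x 3) * hs;
      linear_combination (2 * u 3 * w 3 * x 4) * hs;
      linear_combination (2 * u 3 * w 3 * x 5) * hs;
      linear_combination (2 * u 3 * w 3 * x 6) * hs;
      linear_combination (2 * u 3 * w 3 * x 7) * hs ]

def Bf : LinearMap.BilinForm ℂ V7 :=
  LinearMap.mk₂ ℂ Bform
    (fun m m' n => by simp only [Bform, Pi.add_apply]; ring)
    (fun c m n => by simp only [Bform, Pi.smul_apply, smul_eq_mul]; ring)
    (fun m n n' => by simp only [Bform, Pi.add_apply]; ring)
    (fun c m n => by simp only [Bform, Pi.smul_apply, smul_eq_mul]; ring)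

lemma Bf_apply (u w : V7) : Bf u w = Bform u w := rfl

def Bh : LinearMap.BilinForm ℂ W8 :=
  LinearMap.mk₂ ℂ
    (fun x y => x 0 * y 7 + x 7 * y 0 + x 2 * y 6 + x 6 * y 2
      - x 3 * y 4 - x 4 * y 3 - x 5 * y 1 - x 1 * y 5)
    (fun m m' n => by simp only [Pi.add_apply]; ring)
    (fun c m n => by simp only [Pi.smul_apply, smul_eq_mul]; ring)
    (fun m n n' => by simp only [Pi.add_apply]; ring)
    (fun c m n => by simp only [Pi.smul_apply, smul_eq_mul]; ring)

lemma Bh_apply (x y : W8) : Bh x y = x 0 * y 7 + x 7 * y 0 + x 2 * y 6 + x 6 * y 2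
      - x 3 * y 4 - x 4 * y 3 - x 5 * y 1 - x 1 * y 5 := rfl

lemma Bf_symm (u w : V7) : Bf u w = Bf w u := by simp only [Bf_apply, Bform]; ring

lemma Bh_symm (x y : W8) : Bh x y = Bh y x := by simp only [Bh_apply]; ring

lemma Bf_self (u : V7) : Bf u u = 2 * Qform u := by
  simp only [Bf_apply, Qform]; ring

lemma Bh_self (x : W8) : Bh x x = 2 * Qhat x := by
  simp only [Bh_apply, Qhat]; ring

lemma adjointBh (u : V7) (x y : W8) : Bh (act u x) y = - Bh x (act u y) := by
  simp only [Bh_apply, act_apply, actFun]; ring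

lemma Bh_act_self (u : V7) (x : W8) : Bh (act u x) x = 0 := by
  have h := adjointBh u x x
  rw [Bh_symm x (act u x)] at h
  linear_combination h / 2

lemma act_act (u : V7) (x : W8) : act u (act u x) = -(Qform u) • x := by
  have h := clifford u u x
  have hb : Bform u u = 2 * Qform u := by rw [Qform]; ring
  rw [hb] at h
  apply smul_right_injective W8 (two_ne_zero' ℂ)
  show (2:ℂ) • act u (act u x) = (2:ℂ) • ((-Qform u) • x)
  rw [two_smul, h, smul_smul]
  congr 1; ring

lemma Bf_nondeg : Bf.Nondegenerate := by
  refine (LinearMap.IsRefl.nondegenerate_iff_separatingLeft (B := Bf) (fun x y h => by rw [Bf_symm] at h; exact h)).mpr ?_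
  intro u hu
  have h0 := hu (Pi.single 6 1)
  have h1 := hu (Pi.single 5 1)
  have h2 := hu (Pi.single 4 1)
  have h3 := hu (Pi.single 3 1)
  have h4 := hu (Pi.single 2 1)
  have h5 := hu (Pi.single 1 1)
  have h6 := hu (Pi.single 0 1)
  simp only [Bf_apply, Bform, Pi.single_apply] at h0 h1 h2 h3 h4 h5 h6
  simp (config := { decide := true }) at h0 h1 h2 h3 h4 h5 h6
  funext i
  fin_cases i
  · exact h0
  · exact h1
  · exact h2
  · exact h3
  · exact h4
  · exact h5
  · exact h6

lemma Bh_nondeg : Bh.Nondegenerate := by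
  refine (LinearMap.IsRefl.nondegenerate_iff_separatingLeft (B := Bh) (fun x y h => by rw [Bh_symm] at h; exact h)).mpr ?_
  intro x hx
  have h0 := hx (Pi.single 7 1)
  have h1 := hx (Pi.single 5 1)
  have h2 := hx (Pi.single 6 1)
  have h3 := hx (Pi.single 4 1)
  have h4 := hx (Pi.single 3 1)
  have h5 := hx (Pi.single 1 1)
  have h6 := hx (Pi.single 2 1)
  have h7 := hx (Pi.single 0 1)
  simp only [Bh_apply, Pi.single_apply] at h0 h1 h2 h3 h4 h5 h6 h7
  simp (config := { decide := true }) at h0 h1 h2 h3 h4 h5 h6 h7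
  funext i
  fin_cases i
  · exact h0
  · exact h1
  · exact h2
  · exact h3
  · exact h4
  · exact h5
  · exact h6
  · exact h7

lemma Bf_refl : Bf.IsRefl := fun x y h => by rw [Bf_symm] at h; exact h

lemma Bh_refl : Bh.IsRefl := fun x y h => by rw [Bh_symm] at h; exact h

lemma iso_bound {E : Type} [AddCommGroup E] [Module ℂ E] [FiniteDimensional ℂ E]
    (b : LinearMap.BilinForm ℂ E) (hrefl : b.IsRefl) (hnd : b.Nondegenerate)
    (N : Submodule ℂ E) (hiso : ∀ x ∈ N, ∀ y ∈ N, b x y = 0) :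
    2 * finrank ℂ N ≤ finrank ℂ E := by
  have hle : N ≤ b.orthogonal N := by
    intro y hy
    rw [LinearMap.BilinForm.mem_orthogonal_iff]
    intro x hx
    exact hiso x hx y hy
  have h1 := LinearMap.BilinForm.finrank_orthogonal hnd N
  have h2 : finrank ℂ N ≤ finrank ℂ (b.orthogonal N) := Submodule.finrank_mono hle
  have h3 : finrank ℂ N ≤ finrank ℂ E := N.finrank_le
  omega

lemma finrank_V7 : finrank ℂ V7 = 7 := Module.finrank_fin_fun ℂ

lemma finrank_W8 : finrank ℂ W8 = 8 := Module.finrank_fin_fun ℂ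

/-- The halving lemma. -/
lemma halve (u w : V7) (hQu : Qform u = 0) (huw : Bform u w = -1)
    (N : Submodule ℂ W8) (hNu : ∀ x ∈ N, act u x ∈ N) (hNw : ∀ x ∈ N, act w x ∈ N) :
    Submodule.map (act u) N = LinearMap.ker (act u) ⊓ N ∧
      2 * finrank ℂ (Submodule.map (act u) N) = finrank ℂ N := by
  have hsq : ∀ y : W8, act u (act u y) = 0 := by
    intro y; rw [act_act, hQu, neg_zero, zero_smul]
  have hmain : Submodule.map (act u) N = LinearMap.ker (act u) ⊓ N := by
    apply le_antisymm
    · rintro _ ⟨y, hy, rfl⟩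
      exact ⟨LinearMap.mem_ker.mpr (hsq y), hNu y hy⟩
    · rintro x ⟨hx1, hx2⟩
      have hx1' : act u x = 0 := hx1
      have hc := clifford u w x
      rw [huw] at hc
      rw [hx1', map_zero, add_zero, neg_neg, one_smul] at hc
      exact ⟨act w x, hNw x hx2, hc⟩
  refine ⟨hmain, ?_⟩
  have rn := LinearMap.finrank_range_add_finrank_ker ((act u).comp N.subtype)
  have hr : LinearMap.range ((act u).comp N.subtype) = Submodule.map (act u) N := by
    rw [LinearMap.range_comp, Submodule.range_subtype]
  have hk : LinearMap.ker ((act u).comp N.subtype) =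
      Submodule.comap N.subtype (LinearMap.ker (act u)) := LinearMap.ker_comp _ _
  have hkfr : finrank ℂ (LinearMap.ker ((act u).comp N.subtype)) =
      finrank ℂ (Submodule.map (act u) N) := by
    rw [hk]
    have e1 := (Submodule.comap N.subtype (LinearMap.ker (act u))).equivMapOfInjective
      N.subtype (Submodule.injective_subtype N)
    rw [e1.finrank_eq, Submodule.map_comap_subtype, inf_comm, ← hmain]
  rw [hr, hkfr] at rn
  omega

/-- Existence of vectors dual to three independent vectors. -/
lemma exists_dual_vec (f : Fin 3 → V7) (hf : LinearIndependent ℂ f) (c : Fin 3 → ℂ) :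
    ∃ w : V7, ∀ i, Bform (f i) w = c i := by
  have hsurj : Function.Surjective (LinearMap.pi (fun i => Bf (f i)) : V7 →ₗ[ℂ] (Fin 3 → ℂ)) := by
    set Φ : V7 →ₗ[ℂ] (Fin 3 → ℂ) := LinearMap.pi (fun i => Bf (f i)) with hΦ
    rw [← LinearMap.range_eq_top]
    by_contra hns
    obtain ⟨g, hg0, hgbot⟩ := Submodule.exists_dual_map_eq_bot_of_lt_top
      (lt_top_iff_ne_top.mpr hns) inferInstance
    have hzero : ∀ y : V7, g (Φ y) = 0 := by
      intro y
      have : g (Φ y) ∈ (LinearMap.range Φ).map g :=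
        Submodule.mem_map_of_mem (LinearMap.mem_range_self Φ y)
      rw [hgbot, Submodule.mem_bot] at this
      exact this
    have hcomb : ∀ y : V7, Bf (∑ i, g (fun j => if i = j then 1 else 0) • f i) y = 0 := by
      intro y
      have expand := LinearMap.pi_apply_eq_sum_univ g (Φ y)
      rw [hzero y] at expand
      have : ∀ i : Fin 3, (Φ y) i = Bf (f i) y := fun i => rfl
      simp only [map_sum, LinearMap.sum_apply, LinearMap.map_smul, LinearMap.smul_apply,
        smul_eq_mul]
      simp only [this, smul_eq_mul] at expand
      have hcomm : (∑ i : Fin 3, (g fun j => if i = j then 1 else 0) * (Bf (f i)) y)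
          = ∑ i : Fin 3, (Bf (f i)) y * g fun j => if i = j then 1 else 0 := by
        apply Finset.sum_congr rfl
        intro i _
        ring
      rw [hcomm, ← expand]
    have hzero2 : (∑ i, g (fun j => if i = j then 1 else 0) • f i) = 0 :=
      Bf_nondeg.1 _ (fun y => hcomb y)
    have ha := Fintype.linearIndependent_iff.mp hf _ hzero2
    apply hg0
    apply LinearMap.ext
    intro y
    rw [LinearMap.pi_apply_eq_sum_univ g y]
    simp only [ha, smul_zero, Finset.sum_const_zero, LinearMap.zero_apply]
  obtain ⟨w, hw⟩ := hsurj c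
  exact ⟨w, fun i => by rw [← Bf_apply]; exact congrFun hw i⟩

lemma exists_dual_one (u : V7) (hu : u ≠ 0) : ∃ w, Bform u w = -1 := by
  have h : ¬∀ y, Bf u y = 0 := fun hy => hu (Bf_nondeg.1 u hy)
  push_neg at h
  obtain ⟨y, hy⟩ := h
  refine ⟨(-(Bf u y)⁻¹) • y, ?_⟩
  rw [← Bf_apply, map_smul, smul_eq_mul]
  field_simp

lemma Bform_symm (a c : V7) : Bform a c = Bform c a := by rw [Bform, Bform]; ring

lemma mem_LU_iff (U : Submodule ℂ V7) (x : W8) : x ∈ LU U ↔ ∀ z ∈ U, act z x = 0 := by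
  simp [LU, Submodule.mem_iInf, LinearMap.mem_ker]

lemma hanti (a c : V7) (x : W8) (hB0 : Bform a c = 0) (hax : act a x = 0) :
    act a (act c x) = 0 := by
  have hcl := clifford c a x
  rw [hax, map_zero, zero_add] at hcl
  rw [hcl, Bform_symm c a, hB0, neg_zero, zero_smul]

lemma Qhat_of_ann (x : W8) (u' : V7) (hu' : u' ≠ 0) (hQ : Qform u' = 0)
    (hx : act u' x = 0) : Bh x x = 0 := by
  obtain ⟨w, hw⟩ := exists_dual_one u' hu'
  have hcl := clifford u' w x
  rw [hw, hx, map_zero, add_zero, neg_neg, one_smul] at hcl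
  rw [← hcl, adjointBh, act_act, hQ, neg_zero, zero_smul, map_zero, neg_zero]

lemma finrank_LU (U : Submodule ℂ V7) (h3 : finrank ℂ U = 3) (hiso : IsIsotropic U) :
    finrank ℂ (LU U) = 1 := by
  have b : Basis (Fin 3) ℂ U := Module.finBasisOfFinrankEq ℂ U h3
  set u : Fin 3 → V7 := fun i => (b i : V7) with hu
  have humem : ∀ i, u i ∈ U := fun i => (b i).2
  have hind : LinearIndependent ℂ u :=
    b.linearIndependent.map' U.subtype (Submodule.ker_subtype U)
  have hB : ∀ i j, Bform (u i) (u j) = 0 := fun i j => hiso _ (humem i) _ (humem j)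
  have hQ : ∀ i, Qform (u i) = 0 := fun i => by rw [Qform, hB i i, zero_div]
  obtain ⟨w1, hw1⟩ := exists_dual_vec u hind ![(-1), 0, 0]
  obtain ⟨w2, hw2⟩ := exists_dual_vec u hind ![0, -1, 0]
  obtain ⟨w3, hw3⟩ := exists_dual_vec u hind ![0, 0, -1]
  -- step 1
  have h1 := halve (u 2) w3 (hQ 2) (by simpa using hw3 2) ⊤
    (fun x _ => Submodule.mem_top) (fun x _ => Submodule.mem_top)
  have hK3 : Submodule.map (act (u 2)) ⊤ = LinearMap.ker (act (u 2)) := by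
    rw [h1.1, inf_top_eq]
  have hfr3 : finrank ℂ (LinearMap.ker (act (u 2))) = 4 := by
    have := h1.2
    rw [hK3, finrank_top, finrank_W8] at this
    omega
  -- step 2
  have h2 := halve (u 1) w2 (hQ 1) (by simpa using hw2 1) (LinearMap.ker (act (u 2)))
    (fun x hx => LinearMap.mem_ker.mpr (hanti (u 2) (u 1) x (hB 2 1) (LinearMap.mem_ker.mp hx)))
    (fun x hx => LinearMap.mem_ker.mpr (hanti (u 2) w2 x (by simpa using hw2 2)
      (LinearMap.mem_ker.mp hx)))
  have hfr2 : finrank ℂ (LinearMap.ker (act (u 1)) ⊓ LinearMap.ker (act (u 2)) :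
      Submodule ℂ W8) = 2 := by
    have := h2.2
    rw [h2.1, hfr3] at this
    omega
  -- step 3
  have h3' := halve (u 0) w1 (hQ 0) (by simpa using hw1 0)
    (LinearMap.ker (act (u 1)) ⊓ LinearMap.ker (act (u 2)))
    (fun x hx => by
      obtain ⟨hx1, hx2⟩ := Submodule.mem_inf.mp hx
      exact Submodule.mem_inf.mpr
        ⟨LinearMap.mem_ker.mpr (hanti (u 1) (u 0) x (hB 1 0) (LinearMap.mem_ker.mp hx1)),
         LinearMap.mem_ker.mpr (hanti (u 2) (u 0) x (hB 2 0) (LinearMap.mem_ker.mp hx2))⟩)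
    (fun x hx => by
      obtain ⟨hx1, hx2⟩ := Submodule.mem_inf.mp hx
      exact Submodule.mem_inf.mpr
        ⟨LinearMap.mem_ker.mpr (hanti (u 1) w1 x (by simpa using hw1 1)
            (LinearMap.mem_ker.mp hx1)),
         LinearMap.mem_ker.mpr (hanti (u 2) w1 x (by simpa using hw1 2)
            (LinearMap.mem_ker.mp hx2))⟩)
  have hfrL : finrank ℂ (LinearMap.ker (act (u 0)) ⊓ (LinearMap.ker (act (u 1)) ⊓
      LinearMap.ker (act (u 2))) : Submodule ℂ W8) = 1 := by
    have := h3'.2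
    rw [h3'.1, hfr2] at this
    omega
  -- LU U equals the triple intersection
  have hLU : LU U = LinearMap.ker (act (u 0)) ⊓ (LinearMap.ker (act (u 1)) ⊓
      LinearMap.ker (act (u 2))) := by
    apply le_antisymm
    · intro x hx
      rw [mem_LU_iff] at hx
      exact Submodule.mem_inf.mpr ⟨LinearMap.mem_ker.mpr (hx _ (humem 0)),
        Submodule.mem_inf.mpr ⟨LinearMap.mem_ker.mpr (hx _ (humem 1)),
          LinearMap.mem_ker.mpr (hx _ (humem 2))⟩⟩
    · intro x hx
      obtain ⟨hx0, hx12⟩ := Submodule.mem_inf.mp hx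
      obtain ⟨hx1, hx2⟩ := Submodule.mem_inf.mp hx12
      rw [mem_LU_iff]
      intro z hz
      have hrepr := b.sum_repr ⟨z, hz⟩
      have hz' : z = ∑ i, b.repr ⟨z, hz⟩ i • u i := by
        have := congrArg (U.subtype) hrepr
        simp only [map_sum, map_smul, Submodule.coe_subtype] at this
        exact this.symm
      have hall : ∀ i, act (u i) x = 0 := by
        intro i
        fin_cases i
        · exact hx0
        · exact hx1
        · exact hx2
      rw [hz']
      have hsum : act (∑ i, b.repr ⟨z, hz⟩ i • u i) x
          = ∑ i, b.repr ⟨z, hz⟩ i • act (u i) x := by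
        simp [map_sum, map_smul, LinearMap.sum_apply, LinearMap.smul_apply]
      rw [hsum]
      simp [hall, smul_zero]
  rw [hLU]
  exact hfrL

lemma key_iso {p : W8} (hQ0 : Qhat p = 0) (u u' : V7) : Bh (act u p) (act u' p) = 0 := by
  have m := congrArg (Bh p) (clifford u u' p)
  simp only [map_add, map_smul, smul_eq_mul] at m
  have e1 : Bh p (act u (act u' p)) = - Bh (act u p) (act u' p) := by
    rw [Bh_symm p (act u (act u' p)), adjointBh u (act u' p) p,
      Bh_symm (act u' p) (act u p)]
  have e2 : Bh p (act u' (act u p)) = - Bh (act u p) (act u' p) := by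
    rw [Bh_symm p (act u' (act u p)), adjointBh u' (act u p) p]
  rw [e1, e2, Bh_self, hQ0] at m
  linear_combination (-1/2 : ℂ) * m

lemma inj_act_p {ψ : W8 →ₗ[ℂ] V7} {p : W8} (h : IsInvSurj ψ p) :
    ∀ u : V7, act u p = 0 → u = 0 := by
  intro u hu
  have := h.2.2 u
  rw [hu, map_zero] at this
  exact this.symm

lemma Qhat_p_ne {ψ : W8 →ₗ[ℂ] V7} {p : W8} (h : IsInvSurj ψ p) : Qhat p ≠ 0 := by
  intro hQ0
  set G : V7 →ₗ[ℂ] W8 := act.flip p with hG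
  have hGu : ∀ u : V7, G u = act u p := fun u => rfl
  have hiso : ∀ x ∈ LinearMap.range G, ∀ y ∈ LinearMap.range G, Bh x y = 0 := by
    rintro _ ⟨u, rfl⟩ _ ⟨u', rfl⟩
    exact key_iso hQ0 u u'
  have hb := iso_bound Bh Bh_refl Bh_nondeg (LinearMap.range G) hiso
  rw [finrank_W8] at hb
  have hrn := LinearMap.finrank_range_add_finrank_ker G
  rw [finrank_V7] at hrn
  have hker : finrank ℂ (LinearMap.ker G) ≠ 0 := by omega
  have hne : LinearMap.ker G ≠ ⊥ := by
    intro hbot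
    rw [hbot, finrank_bot] at hker
    exact hker rfl
  obtain ⟨u, hu, hune⟩ := Submodule.exists_mem_ne_zero_of_ne_bot hne
  exact hune (inj_act_p h u (LinearMap.mem_ker.mp hu))

lemma main_aux {ψ : W8 →ₗ[ℂ] V7} {p : W8} (h : IsInvSurj ψ p)
    {v : V7} (hq : Qform v ≠ 0) {μ : ℂ} (hμ2 : μ ^ 2 = -Qform v) (hμ : μ ≠ 0) :
    ψ (act v p + μ • p) = v ∧
    (act v p + μ • p) ≠ 0 ∧
    act v (act v p + μ • p) = μ • (act v p + μ • p) ∧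
    finrank ℂ (LinearMap.ker (act.flip (act v p + μ • p))) = 3 ∧
    IsIsotropic (LinearMap.ker (act.flip (act v p + μ • p))) ∧
    LU (LinearMap.ker (act.flip (act v p + μ • p)))
      = Submodule.span ℂ {act v p + μ • p} ∧
    (∀ u ∈ LinearMap.ker (act.flip (act v p + μ • p)), Bform u v = 0) := by
  obtain ⟨hp0, hψp, hψact⟩ := h
  set x : W8 := act v p + μ • p with hxdef
  have hmemA : ∀ u : V7, u ∈ LinearMap.ker (act.flip x) ↔ act u x = 0 := fun u => Iff.rfl
  have hψx : ψ x = v := by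
    rw [hxdef, map_add, map_smul, hψact, hψp, smul_zero, add_zero]
  have hv0 : v ≠ 0 := by
    intro hv
    apply hq
    rw [hv]
    simp [Qform, Bform]
  have hx0 : x ≠ 0 := by
    intro h0
    exact hv0 (by rw [← hψx, h0, map_zero])
  have hμμ : μ * μ = -(Qform v) := by rw [← hμ2]; ring
  have hvx : act v x = μ • x := by
    rw [hxdef, map_add, map_smul, act_act, smul_add, smul_smul, hμμ]
    abel
  have hisoA : IsIsotropic (LinearMap.ker (act.flip x)) := by
    intro a ha w hw
    have h1 : act a x = 0 := ha
    have h2 : act w x = 0 := hw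
    have hc := clifford a w x
    rw [h1, h2, map_zero, map_zero, add_zero] at hc
    rcases smul_eq_zero.mp hc.symm with hB | hx'
    · exact neg_eq_zero.mp hB
    · exact absurd hx' hx0
  -- upper bound on dimension
  have hub : 2 * finrank ℂ (LinearMap.ker (act.flip x)) ≤ 7 := by
    have := iso_bound Bf Bf_refl Bf_nondeg (LinearMap.ker (act.flip x))
      (fun a ha w hw => hisoA a ha w hw)
    rwa [finrank_V7] at this
  -- lower bound
  set Tc : W8 →ₗ[ℂ] W8 := act v + μ • LinearMap.id with hTcdef
  have hTcapp : ∀ w : W8, Tc w = act v w + μ • w := fun w => rfl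
  have hkerTc : 2 * finrank ℂ (LinearMap.ker Tc) ≤ 8 := by
    have hisoT : ∀ a ∈ LinearMap.ker Tc, ∀ b ∈ LinearMap.ker Tc, Bh a b = 0 := by
      intro a ha b hb
      have ha' : act v a = -(μ • a) := by
        have : act v a + μ • a = 0 := ha
        exact eq_neg_of_add_eq_zero_left this
      have hb' : act v b = -(μ • b) := by
        have : act v b + μ • b = 0 := hb
        exact eq_neg_of_add_eq_zero_left this
      have e := adjointBh v a b
      rw [ha', hb'] at e
      simp only [map_neg, map_smul, LinearMap.neg_apply, LinearMap.smul_apply,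
        smul_eq_mul, neg_neg] at e
      have h2' : 2 * μ * Bh a b = 0 := by linear_combination -e
      exact (mul_eq_zero.mp h2').resolve_left (mul_ne_zero two_ne_zero hμ)
    have := iso_bound Bh Bh_refl Bh_nondeg (LinearMap.ker Tc) hisoT
    rwa [finrank_W8] at this
  have hfrspanp : finrank ℂ (Submodule.span ℂ {p} : Submodule ℂ W8) = 1 :=
    finrank_span_singleton hp0
  have hfrY : finrank ℂ (LinearMap.ker Tc ⊔ Submodule.span ℂ {p} : Submodule ℂ W8) ≤ 5 := by
    have := Submodule.finrank_sup_add_finrank_inf_eq (LinearMap.ker Tc)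
      (Submodule.span ℂ {p})
    omega
  have hφp : Bh p x ≠ 0 := by
    have h1 : Bh p (act v p) = 0 := by
      rw [Bh_symm]
      exact Bh_act_self v p
    have h2 : Bh p x = μ * (2 * Qhat p) := by
      rw [hxdef, map_add, map_smul, h1, smul_eq_mul, Bh_self p]
      ring
    rw [h2]
    exact mul_ne_zero hμ (mul_ne_zero two_ne_zero (Qhat_p_ne ⟨hp0, hψp, hψact⟩))
  have hpY : p ∈ LinearMap.ker Tc ⊔ Submodule.span ℂ {p} :=
    Submodule.mem_sup_right (Submodule.mem_span_singleton_self p)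
  have hZlt : (LinearMap.ker Tc ⊔ Submodule.span ℂ {p}) ⊓ LinearMap.ker (Bh.flip x)
      < LinearMap.ker Tc ⊔ Submodule.span ℂ {p} := by
    apply lt_of_le_of_ne inf_le_left
    intro heq
    have : p ∈ (LinearMap.ker Tc ⊔ Submodule.span ℂ {p}) ⊓ LinearMap.ker (Bh.flip x) := by
      rw [heq]; exact hpY
    exact hφp this.2
  have hfrZ : finrank ℂ ((LinearMap.ker Tc ⊔ Submodule.span ℂ {p})
      ⊓ LinearMap.ker (Bh.flip x) : Submodule ℂ W8) ≤ 4 := by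
    have := Submodule.finrank_lt_finrank_of_lt hZlt
    omega
  have hrange : LinearMap.range (act.flip x) ≤
      (LinearMap.ker Tc ⊔ Submodule.span ℂ {p}) ⊓ LinearMap.ker (Bh.flip x) := by
    rintro _ ⟨u, rfl⟩
    have hux : act.flip x u = act u x := rfl
    constructor
    · -- act u x ∈ Y
      have hc := clifford u v p
      have hc' : act u (act v p) = -(act v (act u p)) + (-(Bform u v)) • p := by
        rw [← hc]; abel
      have hdecomp : act u x = (-(1:ℂ)) • (act v (act u p) - μ • act u p)
          + (-(Bform u v)) • p := by
        rw [hxdef, map_add, map_smul, hc']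
        module
      have hTcw : Tc (act v (act u p) - μ • act u p) = 0 := by
        have hw : (μ * μ) • (act u p) = (-(Qform v)) • (act u p) := by rw [hμμ]
        rw [hTcapp, map_sub, map_smul, act_act, smul_sub, smul_smul, hw]
        abel
      show act u x ∈ LinearMap.ker Tc ⊔ Submodule.span ℂ {p}
      rw [hdecomp]
      exact Submodule.add_mem _
        (Submodule.mem_sup_left (Submodule.smul_mem _ _ (LinearMap.mem_ker.mpr hTcw)))
        (Submodule.mem_sup_right (Submodule.smul_mem _ _ (Submodule.mem_span_singleton_self p)))
    · exact Bh_act_self u x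
  have hrn := LinearMap.finrank_range_add_finrank_ker (act.flip x)
  rw [finrank_V7] at hrn
  have hfrrange := Submodule.finrank_mono hrange
  have hfrA : finrank ℂ (LinearMap.ker (act.flip x)) = 3 := by omega
  -- LU equals span
  have hxLU : x ∈ LU (LinearMap.ker (act.flip x)) := by
    rw [mem_LU_iff]
    intro z hz
    exact hz
  have hLUspan : LU (LinearMap.ker (act.flip x)) = Submodule.span ℂ {x} := by
    have hle : Submodule.span ℂ {x} ≤ LU (LinearMap.ker (act.flip x)) := by
      rw [Submodule.span_le, Set.singleton_subset_iff]
      exact hxLU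
    have h1 := finrank_LU _ hfrA hisoA
    have h2 := finrank_span_singleton (K := ℂ) hx0
    exact (Submodule.eq_of_le_of_finrank_le hle (by omega)).symm
  -- orthogonality to v
  have horth : ∀ u ∈ LinearMap.ker (act.flip x), Bform u v = 0 := by
    intro u hu
    have hux : act u x = 0 := hu
    have hc := clifford u v x
    rw [hvx, map_smul, hux, map_zero, smul_zero, add_zero] at hc
    rcases smul_eq_zero.mp hc.symm with hB | hx'
    · exact neg_eq_zero.mp hB
    · exact absurd hx' hx0
  exact ⟨hψx, hx0, hvx, hfrA, hisoA, hLUspan, horth⟩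

/-- for an invariant surjection `ψ` with spinor `p` and a
non-isotropic `v ∈ V`, there are exactly two 3-dimensional isotropic subspaces
`U ⊆ V` with `ψ(L_U) = ℂv`; they intersect trivially and their sum is the
orthogonal complement of `v`. -/
theorem statement_12 (ψ : W8 →ₗ[ℂ] V7) (p : W8) (h : IsInvSurj ψ p)
    (v : V7) (hq : Qform v ≠ 0) :
    ∃ U₁ U₂ : Submodule ℂ V7, U₁ ≠ U₂ ∧
      (Module.finrank ℂ U₁ = 3 ∧ IsIsotropic U₁ ∧
        Submodule.map ψ (LU U₁) = Submodule.span ℂ {v}) ∧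
      (Module.finrank ℂ U₂ = 3 ∧ IsIsotropic U₂ ∧
        Submodule.map ψ (LU U₂) = Submodule.span ℂ {v}) ∧
      (∀ U : Submodule ℂ V7, Module.finrank ℂ U = 3 → IsIsotropic U →
        Submodule.map ψ (LU U) = Submodule.span ℂ {v} → U = U₁ ∨ U = U₂) ∧
      U₁ ⊓ U₂ = ⊥ ∧
      ((U₁ ⊔ U₂ : Submodule ℂ V7) : Set V7) = {u : V7 | Bform u v = 0} := by
  obtain ⟨hp0, hψp, hψact⟩ := h
  have h' : IsInvSurj ψ p := ⟨hp0, hψp, hψact⟩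
  have hQp : Qhat p ≠ 0 := Qhat_p_ne h'
  have hv0 : v ≠ 0 := by
    intro hv
    apply hq
    rw [hv]
    simp [Qform, Bform]
  obtain ⟨c, hc2⟩ := IsAlgClosed.exists_pow_nat_eq (-Qform v) (n := 2) (by norm_num)
  have hc0 : c ≠ 0 := by
    intro hc
    apply hq
    rw [← neg_eq_zero, ← hc2, hc]
    ring
  have hc2' : (-c) ^ 2 = -Qform v := by rw [neg_pow]; simpa using hc2
  have hcn0 : (-c) ≠ 0 := neg_ne_zero.mpr hc0
  obtain ⟨hψx1, hx10, hvx1, hfr1, hiso1, hLU1, horth1⟩ := main_aux h' hq hc2 hc0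
  obtain ⟨hψx2, hx20, hvx2, hfr2, hiso2, hLU2, horth2⟩ := main_aux h' hq hc2' hcn0
  set x₁ : W8 := act v p + c • p with hx1def
  set x₂ : W8 := act v p + (-c) • p with hx2def
  set U₁ : Submodule ℂ V7 := LinearMap.ker (act.flip x₁) with hU1def
  set U₂ : Submodule ℂ V7 := LinearMap.ker (act.flip x₂) with hU2def
  have hmap1 : Submodule.map ψ (LU U₁) = Submodule.span ℂ {v} := by
    rw [hLU1, Submodule.map_span, Set.image_singleton, hψx1]
  have hmap2 : Submodule.map ψ (LU U₂) = Submodule.span ℂ {v} := by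
    rw [hLU2, Submodule.map_span, Set.image_singleton, hψx2]
  have hx12 : x₁ ≠ x₂ := by
    intro he
    have : (2 * c) • p = 0 := by
      have : x₁ - x₂ = (2 * c) • p := by rw [hx1def, hx2def]; module
      rw [← this, he, sub_self]
    rcases smul_eq_zero.mp this with h2c | hp'
    · exact hc0 (by
        have := mul_eq_zero.mp h2c
        rcases this with h2 | hcc
        · exact absurd h2 two_ne_zero
        · exact hcc)
    · exact hp0 hp'
  have hU12 : U₁ ≠ U₂ := by
    intro hUeq
    have hx1mem : x₁ ∈ Submodule.span ℂ {x₂} := by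
      rw [← hLU2, ← hUeq, hLU1]
      exact Submodule.mem_span_singleton_self x₁
    obtain ⟨t, ht⟩ := Submodule.mem_span_singleton.mp hx1mem
    have hψt : v = t • v := by
      have hc := congrArg ψ ht
      rw [map_smul, hψx1, hψx2] at hc
      exact hc.symm
    have ht1 : t = 1 := by
      by_contra htne
      have : (t - 1) • v = 0 := by
        rw [sub_smul, one_smul, ← hψt, sub_self]
      rcases smul_eq_zero.mp this with h1 | h2
      · exact htne (by linear_combination h1)
      · exact hv0 h2
    rw [ht1, one_smul] at ht
    exact hx12 ht.symm
  -- intersection is trivial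
  have hinter : U₁ ⊓ U₂ = ⊥ := by
    rw [eq_bot_iff]
    rintro u ⟨hu1, hu2⟩
    have ha1 : act u x₁ = 0 := hu1
    have ha2 : act u x₂ = 0 := hu2
    have hdiff : act u ((2 * c) • p) = 0 := by
      have hxx : (2 * c) • p = x₁ - x₂ := by rw [hx1def, hx2def]; module
      rw [hxx, map_sub, ha1, ha2, sub_self]
    rw [map_smul] at hdiff
    rcases smul_eq_zero.mp hdiff with h2c | hup
    · exact absurd h2c (mul_ne_zero two_ne_zero hc0)
    · have := inj_act_p h' u hup
      simp [this, Submodule.mem_bot]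
  -- sum is the orthogonal complement
  have hBvv : (Bf.flip v) v ≠ 0 := by
    have : Bf v v = 2 * Qform v := Bf_self v
    have hne : Bf v v ≠ 0 := by
      rw [this]
      exact mul_ne_zero two_ne_zero hq
    exact hne
  have hfrK : finrank ℂ (LinearMap.ker (Bf.flip v)) = 6 := by
    have hrn := LinearMap.finrank_range_add_finrank_ker (Bf.flip v)
    rw [finrank_V7] at hrn
    have hrle : finrank ℂ (LinearMap.range (Bf.flip v)) ≤ 1 := by
      have := Submodule.finrank_le (LinearMap.range (Bf.flip v))
      rwa [Module.finrank_self] at this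
    have hrne : LinearMap.range (Bf.flip v) ≠ ⊥ := by
      intro hbot
      apply hBvv
      have : (Bf.flip v) v ∈ LinearMap.range (Bf.flip v) := LinearMap.mem_range_self _ v
      rw [hbot, Submodule.mem_bot] at this
      exact this
    have hrpos : finrank ℂ (LinearMap.range (Bf.flip v)) ≠ 0 := by
      intro h0
      exact hrne (Submodule.finrank_eq_zero.mp h0)
    omega
  have hsuple : U₁ ⊔ U₂ ≤ LinearMap.ker (Bf.flip v) := by
    apply sup_le
    · intro u hu
      exact horth1 u hu
    · intro u hu
      exact horth2 u hu
  have hfrsup : finrank ℂ (U₁ ⊔ U₂ : Submodule ℂ V7) = 6 := by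
    have := Submodule.finrank_sup_add_finrank_inf_eq U₁ U₂
    rw [hinter, finrank_bot, hfr1, hfr2] at this
    omega
  have hsupeq : U₁ ⊔ U₂ = LinearMap.ker (Bf.flip v) :=
    Submodule.eq_of_le_of_finrank_le hsuple (by omega)
  have hset : ((U₁ ⊔ U₂ : Submodule ℂ V7) : Set V7) = {u : V7 | Bform u v = 0} := by
    rw [hsupeq]
    ext u
    exact Iff.rfl
  -- uniqueness
  have huniq : ∀ U : Submodule ℂ V7, Module.finrank ℂ U = 3 → IsIsotropic U →
      Submodule.map ψ (LU U) = Submodule.span ℂ {v} → U = U₁ ∨ U = U₂ := by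
    intro U h3U hisoU hmapU
    have hfrLU : finrank ℂ (LU U) = 1 := finrank_LU U h3U hisoU
    have hLUne : LU U ≠ ⊥ := by
      intro hbot
      rw [hbot, finrank_bot] at hfrLU
      exact zero_ne_one hfrLU
    obtain ⟨x₀, hx₀mem, hx₀ne⟩ := Submodule.exists_mem_ne_zero_of_ne_bot hLUne
    have hLUspan : LU U = Submodule.span ℂ {x₀} := by
      have hle : Submodule.span ℂ {x₀} ≤ LU U := by
        rw [Submodule.span_le, Set.singleton_subset_iff]
        exact hx₀mem
      have h2 := finrank_span_singleton (K := ℂ) hx₀ne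
      exact (Submodule.eq_of_le_of_finrank_le hle (by omega)).symm
    -- ψ x₀ = t • v with t ≠ 0
    have hψx₀mem : ψ x₀ ∈ Submodule.span ℂ {v} := by
      rw [← hmapU]
      exact Submodule.mem_map_of_mem hx₀mem
    obtain ⟨t, ht⟩ := Submodule.mem_span_singleton.mp hψx₀mem
    have ht0 : t ≠ 0 := by
      intro ht0
      rw [ht0, zero_smul] at ht
      -- ψ x₀ = 0 ⟹ v = 0
      have hvmem : v ∈ Submodule.map ψ (LU U) := by
        rw [hmapU]
        exact Submodule.mem_span_singleton_self v
      obtain ⟨y, hyLU, hyv⟩ := hvmem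
      rw [hLUspan] at hyLU
      obtain ⟨s, hs⟩ := Submodule.mem_span_singleton.mp hyLU
      apply hv0
      rw [← hyv, ← hs, map_smul, ← ht, smul_zero]
    set x : W8 := t⁻¹ • x₀ with hxdef
    have hxLU : x ∈ LU U := Submodule.smul_mem _ _ hx₀mem
    have hψx : ψ x = v := by
      rw [hxdef, map_smul, ← ht, smul_smul, inv_mul_cancel₀ ht0, one_smul]
    -- decompose x = a • p + act u p
    set g : (ℂ × V7) →ₗ[ℂ] W8 :=
      (LinearMap.toSpanSingleton ℂ W8 p).coprod (act.flip p) with hgdef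
    have hgapp : ∀ z : ℂ × V7, g z = z.1 • p + act z.2 p := fun z => rfl
    have hginj : Function.Injective g := by
      rw [← LinearMap.ker_eq_bot, eq_bot_iff]
      rintro ⟨a, u⟩ hz
      have hz' : a • p + act u p = 0 := hz
      have hu : u = 0 := by
        have := congrArg ψ hz'
        rw [map_add, map_smul, hψp, smul_zero, zero_add, hψact, map_zero] at this
        exact this
      rw [hu] at hz'
      have hz0 : act (0 : V7) p = 0 := by rw [map_zero]; rfl
      rw [hz0, add_zero] at hz'
      have ha : a = 0 := by
        rcases smul_eq_zero.mp hz' with ha | hp'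
        · exact ha
        · exact absurd hp' hp0
      simp [Submodule.mem_bot, Prod.ext_iff, ha, hu]
    have hdim : finrank ℂ (ℂ × V7) = finrank ℂ W8 := by
      rw [Module.finrank_prod, Module.finrank_self, finrank_V7, finrank_W8]
    have hgsurj := (LinearMap.injective_iff_surjective_of_finrank_eq_finrank hdim).mp hginj
    obtain ⟨⟨a, u⟩, hgau⟩ := hgsurj x
    rw [hgapp] at hgau
    have huv : u = v := by
      have := congrArg ψ hgau
      rw [map_add, map_smul, hψp, smul_zero, zero_add, hψact, hψx] at this
      exact this
    rw [huv] at hgau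
    have hUne : U ≠ ⊥ := by
      intro hb
      rw [hb, finrank_bot] at h3U
      exact absurd h3U (by norm_num)
    obtain ⟨u', hu'U, hu'ne⟩ := Submodule.exists_mem_ne_zero_of_ne_bot hUne
    have hQu' : Qform u' = 0 := by rw [Qform, hisoU u' hu'U u' hu'U, zero_div]
    have hactu' : act u' x = 0 := (mem_LU_iff U x).mp hxLU u' hu'U
    have hBxx : Bh x x = 0 := Qhat_of_ann x u' hu'ne hQu' hactu'
    have h1 : Bh (act v p) (act v p) = Qform v * (2 * Qhat p) := by
      rw [adjointBh, act_act, map_smul, smul_eq_mul, Bh_self]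
      ring
    have h2 : Bh (act v p) p = 0 := Bh_act_self v p
    have h3 : Bh p (act v p) = 0 := by rw [Bh_symm]; exact h2
    have h4 : Bh p p = 2 * Qhat p := Bh_self p
    have hexp : Bh x x = (Qform v + a ^ 2) * (2 * Qhat p) := by
      rw [← hgau]
      simp only [map_add, map_smul, LinearMap.add_apply, LinearMap.smul_apply, smul_eq_mul]
      rw [h1, h2, h3, h4]
      ring
    have h0 : (Qform v + a ^ 2) * (2 * Qhat p) = 0 := by rw [← hexp]; exact hBxx
    have hsum : Qform v + a ^ 2 = 0 := by
      rcases mul_eq_zero.mp h0 with hh | hh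
      · exact hh
      · exact absurd hh (by
          intro hz
          rcases mul_eq_zero.mp hz with hh2 | hh2
          · exact two_ne_zero hh2
          · exact hQp hh2)
    have hfac : (a - c) * (a + c) = 0 := by
      linear_combination hsum - hc2
    rcases mul_eq_zero.mp hfac with hac | hac
    · left
      have ha : a = c := by linear_combination hac
      apply Submodule.eq_of_le_of_finrank_le
      · intro z hzU
        show act z x₁ = 0
        have hxx : x = x₁ := by rw [← hgau, ha, hx1def]; module
        rw [← hxx]
        exact (mem_LU_iff U x).mp hxLU z hzU
      · rw [hfr1, h3U]
    · right
      have ha : a = -c := by linear_combination hac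
      apply Submodule.eq_of_le_of_finrank_le
      · intro z hzU
        show act z x₂ = 0
        have hxx : x = x₂ := by rw [← hgau, ha, hx2def]; module
        rw [← hxx]
        exact (mem_LU_iff U x).mp hxLU z hzU
      · rw [hfr2, h3U]
  exact ⟨U₁, U₂, hU12, ⟨hfr1, hiso1, hmap1⟩, ⟨hfr2, hiso2, hmap2⟩, huniq, hinter, hset⟩


end
end SSD
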